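/- Let k₁ and k₂ be odd positive integers and let ε₁, ε₂ ∈ {0, 1}. Then there exists a polynomial p with rational coefficients such that: p(−x) = −p(x) for all x; p has degree exactly k₁ + k₂ + 1; the leading coefficient of p equals 1 / (2·(k₂ + 1)·C(k₁ + k₂ + 1, k₂ + 1)); and for every integer n ≥ 1 with n ≡ ε₁ + ε₂ (mod 2), ∑ i₁^{k₁} · i₂^{k₂} = p(n), where the sum ranges over all pairs of integers i₁, i₂ ≥ 1 with i₁ + i₂ = n, i₁ ≡ ε₁ (mod 2) and i₂ ≡ ε₂ (mod 2). -/

import Mathlib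

open Polynomial Finset

namespace Stmt8

def S (k₁ k₂ ε₁ ε₂ N n : ℕ) : ℚ :=
  ∑ i ∈ Finset.range N,
    if i % 2 = ε₁ ∧ (n - i) % 2 = ε₂ then (i : ℚ) ^ k₁ * ((n - i : ℕ) : ℚ) ^ k₂ else 0

lemma expand_fwd (k₁ k₂ ε₁ ε₂ N n : ℕ) (hN : N ≤ n + 1) :
    S k₁ k₂ ε₁ ε₂ N (n+2)
      = ∑ j ∈ Finset.range (k₂+1), (k₂.choose j : ℚ) * 2^(k₂ - j) * S k₁ j ε₁ ε₂ N n := by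
  unfold S
  have : ∀ j ∈ Finset.range (k₂+1), (k₂.choose j : ℚ) * 2^(k₂ - j) *
      (∑ i ∈ Finset.range N, if i % 2 = ε₁ ∧ (n - i) % 2 = ε₂ then (i : ℚ) ^ k₁ * ((n - i : ℕ) : ℚ) ^ j else 0)
      = ∑ i ∈ Finset.range N, (if i % 2 = ε₁ ∧ (n - i) % 2 = ε₂ then
          (k₂.choose j : ℚ) * 2^(k₂ - j) * ((i : ℚ) ^ k₁ * ((n - i : ℕ) : ℚ) ^ j) else 0) := by
    intro j _
    rw [Finset.mul_sum]
    refine Finset.sum_congr rfl fun i _ => ?_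
    split_ifs <;> simp
  rw [Finset.sum_congr rfl this, Finset.sum_comm]
  refine Finset.sum_congr rfl fun i hi => ?_
  have hi' : i ≤ n := by simp at hi; omega
  have h1 : n + 2 - i = (n - i) + 2 := by omega
  have h2 : (n + 2 - i) % 2 = (n - i) % 2 := by omega
  rw [h2, h1]
  by_cases hc : i % 2 = ε₁ ∧ (n - i) % 2 = ε₂
  · rw [if_pos hc]
    push_cast
    rw [add_pow]
    rw [Finset.mul_sum]
    refine Finset.sum_congr rfl fun j _ => ?_
    rw [if_pos hc]
    push_cast
    ring
  · rw [if_neg hc]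
    simp [if_neg hc]

lemma expand_back (k₁ k₂ ε₁ ε₂ N n : ℕ) (hN : N ≤ n + 1) :
    S k₁ k₂ ε₁ ε₂ N n
      = ∑ j ∈ Finset.range (k₂+1), (k₂.choose j : ℚ) * (-2)^(k₂ - j) * S k₁ j ε₁ ε₂ N (n+2) := by
  unfold S
  have : ∀ j ∈ Finset.range (k₂+1), (k₂.choose j : ℚ) * (-2)^(k₂ - j) *
      (∑ i ∈ Finset.range N, if i % 2 = ε₁ ∧ (n + 2 - i) % 2 = ε₂ then (i : ℚ) ^ k₁ * ((n + 2 - i : ℕ) : ℚ) ^ j else 0)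
      = ∑ i ∈ Finset.range N, (if i % 2 = ε₁ ∧ (n + 2 - i) % 2 = ε₂ then
          (k₂.choose j : ℚ) * (-2)^(k₂ - j) * ((i : ℚ) ^ k₁ * ((n + 2 - i : ℕ) : ℚ) ^ j) else 0) := by
    intro j _
    rw [Finset.mul_sum]
    refine Finset.sum_congr rfl fun i _ => ?_
    split_ifs <;> simp
  rw [Finset.sum_congr rfl this, Finset.sum_comm]
  refine Finset.sum_congr rfl fun i hi => ?_
  have hi' : i ≤ n := by simp at hi; omega
  have h1 : n + 2 - i = (n - i) + 2 := by omega
  have h2 : (n + 2 - i) % 2 = (n - i) % 2 := by omega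
  rw [h2, h1]
  by_cases hc : i % 2 = ε₁ ∧ (n - i) % 2 = ε₂
  · rw [if_pos hc]
    have : ((n - i : ℕ) : ℚ) = (((n - i) + 2 : ℕ) : ℚ) + (-2) := by push_cast; ring
    rw [this, add_pow, Finset.mul_sum]
    refine Finset.sum_congr rfl fun j _ => ?_
    rw [if_pos hc]
    push_cast
    ring
  · rw [if_neg hc]
    simp [if_neg hc]


lemma class_ind {P : ℕ → Prop} (n₀ : ℕ) (base : P n₀)
    (step : ∀ n, n₀ ≤ n → n % 2 = n₀ % 2 → P n → P (n+2)) :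
    ∀ n, n₀ ≤ n → n % 2 = n₀ % 2 → P n := by
  have key : ∀ m, P (n₀ + 2*m) := by
    intro m
    induction m with
    | zero => simpa using base
    | succ m ihm =>
        have h := step (n₀ + 2*m) (by omega) (by omega) ihm
        have e : n₀ + 2*(m+1) = (n₀ + 2*m) + 2 := by ring
        rw [e]; exact h
  intro n hn hmod
  obtain ⟨m, rfl⟩ : ∃ m, n = n₀ + 2*m := ⟨(n - n₀)/2, by omega⟩
  exact key m

lemma neg_one_sq_pow (m : ℕ) : ((-1:ℚ)^m) * ((-1:ℚ)^m) = 1 := by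
  rw [← pow_add]
  have : m + m = 2*m := by ring
  rw [this, pow_mul]
  norm_num

lemma sign_eq (k₁ k₂ j : ℕ) (hj : j ≤ k₂) :
    (-1:ℚ)^(k₁+k₂+1) * (-2:ℚ)^(k₂-j) = (-1:ℚ)^(k₁+j+1) * 2^(k₂-j) := by
  have h2 : (-2:ℚ) = -1 * 2 := by norm_num
  rw [h2, mul_pow, ← mul_assoc, ← pow_add]
  have e : k₁ + k₂ + 1 + (k₂ - j) = (k₁ + j + 1) + 2*(k₂ - j) := by omega
  rw [e, pow_add, pow_mul]
  norm_num

lemma bnd (k₁ k₂ ε₂ : ℕ) (n : ℚ) :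
    (if ε₂ = 1 then ((-n-2)+1)^k₁ else 2^k₂ * (-n-2)^k₁)
      = (-1:ℚ)^(k₁+k₂) * ∑ j ∈ Finset.range (k₂+1), (k₂.choose j : ℚ) * (-2)^(k₂-j) *
          (if ε₂ = 1 then (n+1)^k₁ else (n+2)^k₁ * (0:ℚ)^j) := by
  have hsq := neg_one_sq_pow k₂
  by_cases h : ε₂ = 1
  · simp only [if_pos h]
    have h1 : ∀ j ∈ Finset.range (k₂+1), (k₂.choose j : ℚ) * (-2)^(k₂-j) * (n+1)^k₁
        = ((1:ℚ)^j * (-2)^(k₂-j) * (k₂.choose j : ℚ)) * (n+1)^k₁ := by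
      intro j _; ring
    rw [Finset.sum_congr rfl h1, ← Finset.sum_mul, ← add_pow]
    have e : (-n-2+1 : ℚ) = -(n+1) := by ring
    have e2 : (1 + (-2) : ℚ) = -1 := by norm_num
    rw [e, e2, neg_pow, pow_add]
    linear_combination (-((-1:ℚ)^k₁ * (n+1)^k₁)) * hsq
  · simp only [if_neg h]
    have h1 : ∀ j ∈ Finset.range (k₂+1), (k₂.choose j : ℚ) * (-2)^(k₂-j) * ((n+2)^k₁ * (0:ℚ)^j)
        = ((0:ℚ)^j * (-2)^(k₂-j) * (k₂.choose j : ℚ)) * (n+2)^k₁ := by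
      intro j _; ring
    rw [Finset.sum_congr rfl h1, ← Finset.sum_mul, ← add_pow]
    have e2 : (0 + (-2) : ℚ) = -2 := by norm_num
    have e3 : (-n-2 : ℚ) = -(n+2) := by ring
    rw [e2, e3, neg_pow, neg_pow (2:ℚ), pow_add]
    linear_combination (-((-1:ℚ)^k₁ * 2^k₂ * (n+2)^k₁)) * hsq

lemma S_10 (k₁ k₂ ε₁ ε₂ : ℕ) (hk₁ : 1 ≤ k₁) : S k₁ k₂ ε₁ ε₂ 1 0 = 0 := by
  unfold S
  rw [Finset.sum_range_one]
  split_ifs <;> simp [zero_pow (by omega : k₁ ≠ 0)]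

lemma S_11 (k₁ k₂ ε₁ ε₂ : ℕ) (hk₁ : 1 ≤ k₁) : S k₁ k₂ ε₁ ε₂ 1 1 = 0 := by
  unfold S
  rw [Finset.sum_range_one]
  split_ifs <;> simp [zero_pow (by omega : k₁ ≠ 0)]

lemma S_22 (k₁ k₂ ε₁ ε₂ : ℕ) (hk₁ : 1 ≤ k₁) :
    S k₁ k₂ ε₁ ε₂ 2 2 = if 1 = ε₁ ∧ 1 = ε₂ then 1 else 0 := by
  unfold S
  rw [Finset.sum_range_succ, Finset.sum_range_one]
  norm_num [zero_pow (show k₁ ≠ 0 by omega)]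

lemma S_21 (k₁ j ε₁ ε₂ : ℕ) (hk₁ : 1 ≤ k₁) :
    S k₁ j ε₁ ε₂ 2 1 = if 1 = ε₁ ∧ 0 = ε₂ then (0:ℚ)^j else 0 := by
  unfold S
  rw [Finset.sum_range_succ, Finset.sum_range_one]
  norm_num [zero_pow (show k₁ ≠ 0 by omega)]


lemma step_open (k₁ k₂ ε₁ ε₂ n : ℕ) (hk₁ : 1 ≤ k₁) (hε₁ : ε₁ ≤ 1) (hε₂ : ε₂ ≤ 1)
    (hn : n % 2 = (ε₁ + ε₂) % 2) :
    S k₁ k₂ ε₁ ε₂ (n+2) (n+2) = S k₁ k₂ ε₁ ε₂ n n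
      + ((if ε₂ = 1 then ((n:ℚ)+1)^k₁ else 2^k₂ * (n:ℚ)^k₁)
         + ∑ j ∈ Finset.range k₂, (k₂.choose j : ℚ) * 2^(k₂-j) * S k₁ j ε₁ ε₂ n n) := by
  have h1 : S k₁ k₂ ε₁ ε₂ (n+2) (n+2) = S k₁ k₂ ε₁ ε₂ n (n+2)
      + (if n % 2 = ε₁ ∧ (n + 2 - n) % 2 = ε₂ then (n : ℚ) ^ k₁ * ((n + 2 - n : ℕ) : ℚ) ^ k₂ else 0)
      + (if (n+1) % 2 = ε₁ ∧ (n + 2 - (n+1)) % 2 = ε₂ then ((n+1) : ℚ) ^ k₁ * ((n + 2 - (n+1) : ℕ) : ℚ) ^ k₂ else 0) := by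
    unfold S
    rw [Finset.sum_range_succ, Finset.sum_range_succ]
    push_cast
    ring
  have h2 := expand_fwd k₁ k₂ ε₁ ε₂ n n (by omega)
  rw [Finset.sum_range_succ] at h2
  simp only [Nat.choose_self, Nat.cast_one, Nat.sub_self, pow_zero, one_mul, mul_one] at h2
  have h3 : n + 2 - n = 2 := by omega
  have h4 : n + 2 - (n+1) = 1 := by omega
  rw [h3, h4] at h1
  rcases Nat.le_one_iff_eq_zero_or_eq_one.mp hε₂ with h | h
  · subst h
    have c1 : n % 2 = ε₁ ∧ (2:ℕ) % 2 = 0 := ⟨by omega, by norm_num⟩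
    have c2 : ¬((n+1) % 2 = ε₁ ∧ (1:ℕ) % 2 = 0) := by omega
    rw [if_pos c1, if_neg c2] at h1
    rw [h1, h2, if_neg (one_ne_zero ∘ Eq.symm)]
    push_cast
    ring
  · subst h
    have c1 : ¬(n % 2 = ε₁ ∧ (2:ℕ) % 2 = 1) := by omega
    have c2 : (n+1) % 2 = ε₁ ∧ (1:ℕ) % 2 = 1 := ⟨by omega, by norm_num⟩
    rw [if_neg c1, if_pos c2] at h1
    rw [h1, h2, if_pos rfl]
    push_cast
    ring

lemma step_closed_back (k₁ k₂ ε₁ ε₂ n : ℕ) (hε₁ : ε₁ ≤ 1) (hε₂ : ε₂ ≤ 1)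
    (hn : n % 2 = (ε₁ + ε₂) % 2) :
    S k₁ k₂ ε₁ ε₂ (n+1) n
      = ∑ j ∈ Finset.range (k₂+1), (k₂.choose j : ℚ) * (-2)^(k₂-j) *
          (S k₁ j ε₁ ε₂ (n+3) (n+2)
            - (if ε₂ = 1 then ((n:ℚ)+1)^k₁ else ((n:ℚ)+2)^k₁ * (0:ℚ)^j)) := by
  rw [expand_back k₁ k₂ ε₁ ε₂ (n+1) n (by omega)]
  refine Finset.sum_congr rfl fun j _ => ?_
  congr 1
  have h1 : S k₁ j ε₁ ε₂ (n+3) (n+2) = S k₁ j ε₁ ε₂ (n+1) (n+2)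
      + (if (n+1) % 2 = ε₁ ∧ (n + 2 - (n+1)) % 2 = ε₂ then ((n+1) : ℚ) ^ k₁ * ((n + 2 - (n+1) : ℕ) : ℚ) ^ j else 0)
      + (if (n+2) % 2 = ε₁ ∧ (n + 2 - (n+2)) % 2 = ε₂ then ((n+2) : ℚ) ^ k₁ * ((n + 2 - (n+2) : ℕ) : ℚ) ^ j else 0) := by
    unfold S
    rw [Finset.sum_range_succ, Finset.sum_range_succ]
    push_cast
    ring
  have h3 : n + 2 - (n+1) = 1 := by omega
  have h4 : n + 2 - (n+2) = 0 := by omega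
  rw [h3, h4] at h1
  rcases Nat.le_one_iff_eq_zero_or_eq_one.mp hε₂ with h | h
  · subst h
    have c1 : ¬((n+1) % 2 = ε₁ ∧ (1:ℕ) % 2 = 0) := by omega
    have c2 : (n+2) % 2 = ε₁ ∧ (0:ℕ) % 2 = 0 := ⟨by omega, by norm_num⟩
    rw [if_neg c1, if_pos c2] at h1
    rw [if_neg (one_ne_zero ∘ Eq.symm), h1]
    push_cast
    ring
  · subst h
    have c1 : (n+1) % 2 = ε₁ ∧ (1:ℕ) % 2 = 1 := ⟨by omega, by norm_num⟩
    have c2 : ¬((n+2) % 2 = ε₁ ∧ (0:ℕ) % 2 = 1) := by omega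
    rw [if_pos c1, if_neg c2] at h1
    rw [if_pos rfl, h1]
    push_cast
    ring


lemma D_coeff_top (m : ℕ) : (((X + C (2:ℚ))^(m+1) - X^(m+1)).coeff m) = 2*((m:ℚ)+1) := by
  rw [coeff_sub, Polynomial.coeff_X_add_C_pow, coeff_X_pow]
  simp [Nat.choose_succ_self_right]

lemma D_deg (m : ℕ) : ((X + C (2:ℚ))^(m+1) - X^(m+1)).degree < ((m+1 : ℕ) : WithBot ℕ) := by
  rw [Polynomial.degree_lt_iff_coeff_zero]
  intro j hj
  rw [coeff_sub, Polynomial.coeff_X_add_C_pow, coeff_X_pow]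
  have hj' : (m+1 : ℕ) ≤ j := by exact_mod_cast hj
  rcases eq_or_lt_of_le hj' with h | h
  · subst h; simp
  · rw [Nat.choose_eq_zero_of_lt h]
    simp
    intro hc; omega

lemma antider (r : Polynomial ℚ) : ∃ p : Polynomial ℚ,
    p.comp (X + C 2) - p = r ∧
    (r ≠ 0 → p.degree = r.degree + 1 ∧
      p.leadingCoeff = r.leadingCoeff / (2 * (r.natDegree + 1))) := by
  generalize hd : r.natDegree = d
  induction d using Nat.strong_induction_on generalizing r with
  | _ d ih =>
  by_cases h0 : r = 0
  · exact ⟨0, by simp [h0], fun hc => absurd h0 hc⟩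
  set a := r.leadingCoeff with ha
  set c : ℚ := a / (2 * (d + 1)) with hc
  have hc0 : c ≠ 0 := by
    rw [hc]
    apply div_ne_zero (leadingCoeff_ne_zero.mpr h0)
    positivity
  set D : Polynomial ℚ := (X + C (2:ℚ))^(d+1) - X^(d+1) with hD
  set r' : Polynomial ℚ := r - C c * D with hr'
  have hΔ0 : (C c * X^(d+1)).comp (X + C 2) - C c * X^(d+1) = C c * D := by
    simp [hD]
    ring
  have hra : r.coeff d = a := by rw [ha, ← hd]; rfl
  have hr'deg : r'.degree < (d : WithBot ℕ) := by
    rw [Polynomial.degree_lt_iff_coeff_zero]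
    intro j hj
    have hj' : d ≤ j := by exact_mod_cast hj
    rw [hr', coeff_sub, coeff_C_mul]
    rcases eq_or_lt_of_le hj' with h | h
    · subst h
      rw [D_coeff_top, hra, hc]
      have h2 : 2*((d:ℚ)+1) ≠ 0 := by positivity
      field_simp
      ring
    · have h1 : r.coeff j = 0 := by
        apply coeff_eq_zero_of_degree_lt
        calc r.degree ≤ (d : WithBot ℕ) := by rw [← hd]; exact degree_le_natDegree
        _ < (j : WithBot ℕ) := by exact_mod_cast h
      have h2 : D.coeff j = 0 := by
        apply coeff_eq_zero_of_degree_lt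
        calc D.degree < ((d+1 : ℕ) : WithBot ℕ) := D_deg d
        _ ≤ (j : WithBot ℕ) := by exact_mod_cast h
      rw [h1, h2]; ring
  have hdegCX : (C c * X^(d+1)).degree = ((d+1 : ℕ) : WithBot ℕ) := degree_C_mul_X_pow _ hc0
  have hrdeg : r.degree = (d : WithBot ℕ) := by rw [degree_eq_natDegree h0, hd]
  have hdcast : (d : WithBot ℕ) + 1 = ((d+1 : ℕ) : WithBot ℕ) := by push_cast; ring
  -- get p' with Δp' = r' and p'.degree < d+1
  have hex : ∃ p' : Polynomial ℚ, p'.comp (X + C 2) - p' = r' ∧ p'.degree < ((d+1:ℕ) : WithBot ℕ) := by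
    by_cases h0' : r' = 0
    · exact ⟨0, by simp [h0'], by simp [degree_zero]⟩
    · have hnd' : r'.natDegree < d := by
        have := degree_eq_natDegree h0'
        rw [this] at hr'deg
        exact_mod_cast hr'deg
      obtain ⟨p', hp'Δ, hp'info⟩ := ih r'.natDegree hnd' r' rfl
      obtain ⟨hdeg', _⟩ := hp'info h0'
      refine ⟨p', hp'Δ, ?_⟩
      rw [hdeg']
      calc r'.degree + 1 < (d : WithBot ℕ) + 1 := by
            exact WithBot.add_lt_add_right (by simp) hr'deg
      _ = ((d+1:ℕ) : WithBot ℕ) := hdcast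
  obtain ⟨p', hp'Δ, hp'd⟩ := hex
  refine ⟨C c * X^(d+1) + p', ?_, fun _ => ?_⟩
  · rw [add_comp, sub_eq_iff_eq_add]
    rw [sub_eq_iff_eq_add] at hp'Δ hΔ0
    rw [hp'Δ, hΔ0, hr']
    ring
  · have hdeg : (C c * X^(d+1) + p').degree = ((d+1:ℕ) : WithBot ℕ) := by
      rw [degree_add_eq_left_of_degree_lt (by rw [hdegCX]; exact hp'd), hdegCX]
    constructor
    · rw [hdeg, hrdeg, hdcast]
    · have hnd : (C c * X^(d+1) + p').natDegree = d+1 := natDegree_eq_of_degree_eq_some hdeg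
      rw [leadingCoeff, hnd, coeff_add, coeff_C_mul, coeff_X_pow, if_pos rfl,
        coeff_eq_zero_of_degree_lt hp'd]
      ring


theorem main (k₁ ε₁ ε₂ : ℕ) (hk₁ : 1 ≤ k₁) (hε₁ : ε₁ ≤ 1) (hε₂ : ε₂ ≤ 1) (k₂ : ℕ) :
    ∃ p : Polynomial ℚ,
      p.degree = ((k₁ + k₂ + 1 : ℕ) : WithBot ℕ) ∧
      p.leadingCoeff = (k₁.factorial : ℚ) * k₂.factorial / (2 * (k₁ + k₂ + 1).factorial) ∧
      (∀ n : ℕ, 1 ≤ n → n % 2 = (ε₁ + ε₂) % 2 → S k₁ k₂ ε₁ ε₂ n n = p.eval (n:ℚ)) ∧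
      (∀ n : ℕ, n % 2 = (ε₁ + ε₂) % 2 →
        p.eval (-(n:ℚ)) = (-1:ℚ)^(k₁+k₂+1) * S k₁ k₂ ε₁ ε₂ (n+1) n) := by
  induction k₂ using Nat.strong_induction_on with
  | _ k₂ ih =>
  have IH' : ∀ j, ∃ p : Polynomial ℚ, j < k₂ →
      (p.degree = ((k₁ + j + 1 : ℕ) : WithBot ℕ) ∧
       p.leadingCoeff = (k₁.factorial : ℚ) * j.factorial / (2 * (k₁ + j + 1).factorial) ∧
       (∀ n : ℕ, 1 ≤ n → n % 2 = (ε₁ + ε₂) % 2 → S k₁ j ε₁ ε₂ n n = p.eval (n:ℚ)) ∧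
       (∀ n : ℕ, n % 2 = (ε₁ + ε₂) % 2 →
         p.eval (-(n:ℚ)) = (-1:ℚ)^(k₁+j+1) * S k₁ j ε₁ ε₂ (n+1) n)) := by
    intro j
    by_cases h : j < k₂
    · obtain ⟨p, hp⟩ := ih j h
      exact ⟨p, fun _ => hp⟩
    · exact ⟨0, fun hc => absurd hc h⟩
  choose P hP using IH'
  have hPdeg : ∀ j, j < k₂ → (P j).degree = ((k₁ + j + 1 : ℕ) : WithBot ℕ) :=
    fun j hj => (hP j hj).1
  have hPlc : ∀ j, j < k₂ →
      (P j).leadingCoeff = (k₁.factorial : ℚ) * j.factorial / (2 * (k₁ + j + 1).factorial) :=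
    fun j hj => (hP j hj).2.1
  have hPopen : ∀ j, j < k₂ → ∀ n : ℕ, 1 ≤ n → n % 2 = (ε₁ + ε₂) % 2 →
      S k₁ j ε₁ ε₂ n n = (P j).eval (n:ℚ) := fun j hj => (hP j hj).2.2.1
  have hPclosed : ∀ j, j < k₂ → ∀ n : ℕ, n % 2 = (ε₁ + ε₂) % 2 →
      (P j).eval (-(n:ℚ)) = (-1:ℚ)^(k₁+j+1) * S k₁ j ε₁ ε₂ (n+1) n :=
    fun j hj => (hP j hj).2.2.2
  set bpoly : Polynomial ℚ := if ε₂ = 1 then (X + C 1)^k₁ else C ((2:ℚ)^k₂) * X^k₁ with hbp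
  set rp : Polynomial ℚ :=
    bpoly + ∑ j ∈ Finset.range k₂, C ((k₂.choose j : ℚ) * 2^(k₂-j)) * P j with hrp
  have hbeval : ∀ x : ℚ, bpoly.eval x = if ε₂ = 1 then (x+1)^k₁ else 2^k₂ * x^k₁ := by
    intro x
    by_cases h : ε₂ = 1 <;> simp [hbp, h]
  have hreval : ∀ x : ℚ, rp.eval x = bpoly.eval x
      + ∑ j ∈ Finset.range k₂, (k₂.choose j : ℚ) * 2^(k₂-j) * (P j).eval x := by
    intro x
    simp [hrp, eval_finset_sum]
  have hbdeg : bpoly.degree = ((k₁:ℕ) : WithBot ℕ) := by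
    by_cases h : ε₂ = 1
    · rw [hbp, if_pos h, degree_pow, degree_X_add_C (1:ℚ)]
      simp
    · rw [hbp, if_neg h, degree_C_mul_X_pow _ (by positivity)]
  have hbcoeff : bpoly.coeff (k₁ + k₂) = if k₂ = 0 then 1 else 0 := by
    by_cases h : ε₂ = 1
    · rw [hbp, if_pos h, Polynomial.coeff_X_add_C_pow]
      by_cases hk : k₂ = 0
      · subst hk; simp
      · rw [if_neg hk, Nat.choose_eq_zero_of_lt (by omega)]
        simp
    · rw [hbp, if_neg h, coeff_C_mul, coeff_X_pow]
      by_cases hk : k₂ = 0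
      · subst hk; simp
      · rw [if_neg hk, if_neg (by omega)]
        ring
  have hrcoeff : rp.coeff (k₁+k₂) = (k₁.factorial : ℚ) * k₂.factorial / (k₁+k₂).factorial := by
    rw [hrp, coeff_add, Polynomial.finset_sum_coeff]
    rcases Nat.eq_zero_or_pos k₂ with hk | hk
    · subst hk
      rw [hbcoeff]
      simp [Nat.factorial]
      rw [div_self]
      exact_mod_cast Nat.factorial_ne_zero k₁
    · obtain ⟨m, rfl⟩ : ∃ m, k₂ = m + 1 := ⟨k₂ - 1, by omega⟩
      rw [hbcoeff, if_neg (by omega), zero_add]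
      rw [Finset.sum_eq_single m]
      · rw [coeff_C_mul]
        have hm : m < m + 1 := by omega
        have hnd : (P m).natDegree = k₁ + m + 1 := natDegree_eq_of_degree_eq_some (hPdeg m hm)
        have he : k₁ + (m+1) = k₁ + m + 1 := by omega
        rw [he, ← hnd, ← leadingCoeff, hPlc m hm]
        rw [Nat.choose_succ_self_right]
        have h1 : ((k₁ + m + 1).factorial : ℚ) ≠ 0 := by exact_mod_cast Nat.factorial_ne_zero _
        have he2 : (m+1) - m = 1 := by omega
        rw [he2, hnd]
        rw [Nat.factorial_succ m]
        push_cast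
        field_simp
      · intro j hjmem hjne
        rw [coeff_C_mul]
        have hj : j < m + 1 := mem_range.mp hjmem
        have hz : (P j).coeff (k₁+(m+1)) = 0 := by
          apply coeff_eq_zero_of_degree_lt
          rw [hPdeg j hj]
          exact_mod_cast (by omega : k₁+j+1 < k₁+(m+1))
        rw [hz, mul_zero]
      · intro hnm
        exact absurd (mem_range.mpr (by omega)) hnm
  have hrdegle : rp.degree ≤ ((k₁+k₂ : ℕ) : WithBot ℕ) := by
    rw [hrp]
    apply le_trans (degree_add_le _ _)
    apply max_le
    · rw [hbdeg]
      exact_mod_cast (by omega : k₁ ≤ k₁+k₂)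
    · apply le_trans (degree_sum_le _ _)
      apply Finset.sup_le
      intro j hj
      have hjlt : j < k₂ := mem_range.mp hj
      refine le_trans (degree_mul_le _ _) ?_
      refine le_trans (add_le_add degree_C_le le_rfl) ?_
      rw [zero_add, hPdeg j hjlt]
      exact_mod_cast (by omega : k₁ + j + 1 ≤ k₁+k₂)
  have hfacne : ∀ m : ℕ, ((m.factorial : ℚ)) ≠ 0 := fun m => by
    exact_mod_cast Nat.factorial_ne_zero m
  have hcne : rp.coeff (k₁+k₂) ≠ 0 := by
    rw [hrcoeff]
    apply div_ne_zero (mul_ne_zero (hfacne k₁) (hfacne k₂)) (hfacne _)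
  have hrdeg : rp.degree = ((k₁+k₂:ℕ) : WithBot ℕ) :=
    le_antisymm hrdegle (le_degree_of_ne_zero hcne)
  have hrne : rp ≠ 0 := fun h => hcne (by rw [h, coeff_zero])
  have hrnd : rp.natDegree = k₁+k₂ := natDegree_eq_of_degree_eq_some hrdeg
  have hrlc : rp.leadingCoeff = (k₁.factorial:ℚ) * k₂.factorial / (k₁+k₂).factorial := by
    rw [leadingCoeff, hrnd, hrcoeff]
  obtain ⟨p₁, hΔ₁, hinfo⟩ := antider rp
  obtain ⟨hp₁deg, hp₁lc⟩ := hinfo hrne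
  have hp₁deg' : p₁.degree = ((k₁+k₂+1 : ℕ) : WithBot ℕ) := by
    rw [hp₁deg, hrdeg]
    push_cast
    ring
  set n₀ : ℕ := 2 - (ε₁+ε₂) % 2 with hn₀
  set p : Polynomial ℚ := p₁ + C (S k₁ k₂ ε₁ ε₂ n₀ n₀ - p₁.eval (n₀:ℚ)) with hpdef
  have hΔ : ∀ x : ℚ, p.eval (x + 2) = p.eval x + rp.eval x := by
    intro x
    have h := congrArg (eval x) hΔ₁
    simp only [eval_sub, eval_comp, eval_add, eval_X, eval_C] at h
    simp only [hpdef, eval_add, eval_C]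
    linarith
  have hdeg : p.degree = ((k₁+k₂+1 : ℕ) : WithBot ℕ) := by
    rw [hpdef, degree_add_eq_left_of_degree_lt, hp₁deg']
    rw [hp₁deg']
    calc (C (S k₁ k₂ ε₁ ε₂ n₀ n₀ - p₁.eval (n₀:ℚ))).degree ≤ 0 := degree_C_le
    _ < ((k₁+k₂+1 : ℕ) : WithBot ℕ) := by exact_mod_cast (by omega : 0 < k₁+k₂+1)
  have hnd : p.natDegree = k₁+k₂+1 := natDegree_eq_of_degree_eq_some hdeg
  have hlc : p.leadingCoeff = (k₁.factorial:ℚ)*k₂.factorial/(2*(k₁+k₂+1).factorial) := by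
    have hp₁nd : p₁.natDegree = k₁+k₂+1 := natDegree_eq_of_degree_eq_some hp₁deg'
    have h1 : p.coeff (k₁+k₂+1) = p₁.coeff (k₁+k₂+1) := by
      rw [hpdef, coeff_add, coeff_C, if_neg (by omega)]
      ring
    rw [leadingCoeff, hnd, h1, ← hp₁nd, ← leadingCoeff, hp₁lc, hrlc, hrnd, hp₁nd]
    rw [Nat.factorial_succ (k₁+k₂)]
    have hne : ((k₁+k₂).factorial : ℚ) ≠ 0 := hfacne _
    push_cast
    field_simp
  have hanchor : p.eval (n₀:ℚ) = S k₁ k₂ ε₁ ε₂ n₀ n₀ := by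
    rw [hpdef]
    simp
  -- open sums
  have hopen : ∀ n : ℕ, 1 ≤ n → n % 2 = (ε₁ + ε₂) % 2 → S k₁ k₂ ε₁ ε₂ n n = p.eval (n:ℚ) := by
    have key : ∀ n, n₀ ≤ n → n % 2 = n₀ % 2 → S k₁ k₂ ε₁ ε₂ n n = p.eval (n:ℚ) := by
      refine class_ind (P := fun n => S k₁ k₂ ε₁ ε₂ n n = p.eval (n:ℚ)) n₀ hanchor.symm ?_
      intro n hn hmod hind
      show S k₁ k₂ ε₁ ε₂ (n+2) (n+2) = p.eval (((n+2:ℕ)):ℚ)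
      have hcl : n % 2 = (ε₁+ε₂) % 2 := by omega
      have hc2 : ((n+2 : ℕ) : ℚ) = (n:ℚ) + 2 := by push_cast; ring
      rw [step_open k₁ k₂ ε₁ ε₂ n hk₁ hε₁ hε₂ hcl, hc2, hΔ, hreval, hbeval, hind]
      have hsums : ∀ j ∈ Finset.range k₂, (k₂.choose j : ℚ) * 2^(k₂-j) * S k₁ j ε₁ ε₂ n n
          = (k₂.choose j : ℚ) * 2^(k₂-j) * (P j).eval (n:ℚ) := by
        intro j hj
        rw [hPopen j (mem_range.mp hj) n (by omega) hcl]
      rw [Finset.sum_congr rfl hsums]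
    intro n h1 h2
    exact key n (by omega) (by omega)
  -- closed sums / reciprocity
  have hclosed : ∀ n : ℕ, n % 2 = (ε₁ + ε₂) % 2 →
      p.eval (-(n:ℚ)) = (-1:ℚ)^(k₁+k₂+1) * S k₁ k₂ ε₁ ε₂ (n+1) n := by
    set r₀ : ℕ := (ε₁+ε₂) % 2 with hr₀
    have key : ∀ n, r₀ ≤ n → n % 2 = r₀ % 2 →
        p.eval (-(n:ℚ)) = (-1:ℚ)^(k₁+k₂+1) * S k₁ k₂ ε₁ ε₂ (n+1) n := by
      refine class_ind (P := fun n => p.eval (-(n:ℚ)) = (-1:ℚ)^(k₁+k₂+1) * S k₁ k₂ ε₁ ε₂ (n+1) n) r₀ ?_ ?_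
      · -- base case
        show p.eval (-(r₀:ℚ)) = (-1:ℚ)^(k₁+k₂+1) * S k₁ k₂ ε₁ ε₂ (r₀+1) r₀
        have h2 := hΔ (-(r₀:ℚ))
        have hn₀r : ((n₀:ℕ):ℚ) = -(r₀:ℚ) + 2 := by
          rw [hn₀]
          push_cast [Nat.cast_sub (by omega : r₀ ≤ 2)]
          ring
        rw [← hn₀r, hanchor] at h2
        have h3 : p.eval (-(r₀:ℚ)) = S k₁ k₂ ε₁ ε₂ n₀ n₀ - rp.eval (-(r₀:ℚ)) := by linarith
        rw [h3, hreval, hbeval]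
        have hPs : ∀ j ∈ Finset.range k₂, (k₂.choose j : ℚ) * 2^(k₂-j) * (P j).eval (-(r₀:ℚ))
            = (k₂.choose j : ℚ) * 2^(k₂-j) * ((-1:ℚ)^(k₁+j+1) * S k₁ j ε₁ ε₂ (r₀+1) r₀) := by
          intro j hj
          rw [hPclosed j (mem_range.mp hj) r₀ (by omega)]
        rw [Finset.sum_congr rfl hPs]
        -- now case analysis on ε₁, ε₂
        rcases Nat.le_one_iff_eq_zero_or_eq_one.mp hε₁ with he1 | he1 <;>
          rcases Nat.le_one_iff_eq_zero_or_eq_one.mp hε₂ with he2 | he2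
        · -- ε₁ = 0, ε₂ = 0 : r₀ = 0, n₀ = 2
          subst he1; subst he2
          have hr0 : r₀ = 0 := by omega
          have hn0 : n₀ = 2 := by omega
          rw [hr0, hn0]
          norm_num
          rw [S_22 k₁ k₂ 0 0 hk₁, S_10 k₁ k₂ 0 0 hk₁,
            Finset.sum_eq_zero (fun j _ => by rw [S_10 k₁ j 0 0 hk₁]; ring)]
          norm_num [zero_pow (show k₁ ≠ 0 by omega)]
        · -- ε₁ = 0, ε₂ = 1 : r₀ = 1, n₀ = 1
          subst he1; subst he2
          have hr0 : r₀ = 1 := by omega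
          have hn0 : n₀ = 1 := by omega
          rw [hr0, hn0]
          norm_num
          rw [S_11 k₁ k₂ 0 1 hk₁, S_21 k₁ k₂ 0 1 hk₁,
            Finset.sum_eq_zero (fun j _ => by rw [S_21 k₁ j 0 1 hk₁]; norm_num)]
          norm_num [zero_pow (show k₁ ≠ 0 by omega)]
        · -- ε₁ = 1, ε₂ = 0 : r₀ = 1, n₀ = 1
          subst he1; subst he2
          have hr0 : r₀ = 1 := by omega
          have hn0 : n₀ = 1 := by omega
          rw [hr0, hn0]
          norm_num
          rw [S_11 k₁ k₂ 1 0 hk₁, S_21 k₁ k₂ 1 0 hk₁]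
          norm_num
          rcases Nat.eq_zero_or_pos k₂ with hk | hk
          · subst hk
            norm_num [pow_succ]
          · obtain ⟨m, rfl⟩ : ∃ m, k₂ = m + 1 := ⟨k₂ - 1, by omega⟩
            rw [Finset.sum_eq_single 0]
            · rw [S_21 k₁ 0 1 0 hk₁]
              norm_num [pow_succ, zero_pow (show m + 1 ≠ 0 by omega)]
            · intro j hjm hj0
              rw [S_21 k₁ j 1 0 hk₁]
              norm_num [zero_pow hj0]
            · intro h0
              exact absurd (mem_range.mpr (by omega)) h0
        · -- ε₁ = 1, ε₂ = 1 : r₀ = 0, n₀ = 2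
          subst he1; subst he2
          have hr0 : r₀ = 0 := by omega
          have hn0 : n₀ = 2 := by omega
          rw [hr0, hn0]
          norm_num
          rw [S_22 k₁ k₂ 1 1 hk₁, S_10 k₁ k₂ 1 1 hk₁,
            Finset.sum_eq_zero (fun j _ => by rw [S_10 k₁ j 1 1 hk₁]; ring)]
          norm_num
      · -- inductive step
        intro n hn hmod hind
        show p.eval (-((n+2:ℕ):ℚ)) = (-1:ℚ)^(k₁+k₂+1) * S k₁ k₂ ε₁ ε₂ (n+3) (n+2)
        have hcl : n % 2 = (ε₁+ε₂) % 2 := by omega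
        have hcl2 : (n+2) % 2 = (ε₁+ε₂) % 2 := by omega
        have H1 : p.eval (-((n+2:ℕ):ℚ)) = p.eval (-(n:ℚ)) - rp.eval (-(n:ℚ) - 2) := by
          have h := hΔ (-(n:ℚ) - 2)
          have e : (-(n:ℚ) - 2) + 2 = -(n:ℚ) := by ring
          rw [e] at h
          have e2 : -(((n+2:ℕ)):ℚ) = -(n:ℚ) - 2 := by push_cast; ring
          rw [e2]; linarith
        have H4 : rp.eval (-(n:ℚ) - 2)
            = (if ε₂ = 1 then ((-(n:ℚ)-2)+1)^k₁ else 2^k₂ * (-(n:ℚ)-2)^k₁)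
            + ∑ j ∈ Finset.range k₂, (k₂.choose j : ℚ) * 2^(k₂-j) *
                ((-1:ℚ)^(k₁+j+1) * S k₁ j ε₁ ε₂ (n+3) (n+2)) := by
          rw [hreval, hbeval]
          congr 1
          refine Finset.sum_congr rfl fun j hj => ?_
          have e2 : -(n:ℚ) - 2 = -(((n+2:ℕ)):ℚ) := by push_cast; ring
          rw [e2, hPclosed j (mem_range.mp hj) (n+2) hcl2]
        have H3 : S k₁ k₂ ε₁ ε₂ (n+1) n
            = ∑ j ∈ Finset.range k₂, (k₂.choose j:ℚ) * (-2)^(k₂-j) *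
                (S k₁ j ε₁ ε₂ (n+3) (n+2)
                  - (if ε₂ = 1 then ((n:ℚ)+1)^k₁ else ((n:ℚ)+2)^k₁ * (0:ℚ)^j))
              + (S k₁ k₂ ε₁ ε₂ (n+3) (n+2)
                  - (if ε₂ = 1 then ((n:ℚ)+1)^k₁ else ((n:ℚ)+2)^k₁ * (0:ℚ)^k₂)) := by
          rw [step_closed_back k₁ k₂ ε₁ ε₂ n hε₁ hε₂ hcl, Finset.sum_range_succ]
          simp only [Nat.choose_self, Nat.cast_one, Nat.sub_self, pow_zero, one_mul]
        have H5 : (if ε₂ = 1 then ((-(n:ℚ)-2)+1)^k₁ else 2^k₂ * (-(n:ℚ)-2)^k₁)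
            = (-1:ℚ)^(k₁+k₂) * (∑ j ∈ Finset.range k₂, (k₂.choose j:ℚ) * (-2)^(k₂-j) *
                  (if ε₂ = 1 then ((n:ℚ)+1)^k₁ else ((n:ℚ)+2)^k₁ * (0:ℚ)^j)
                + (if ε₂ = 1 then ((n:ℚ)+1)^k₁ else ((n:ℚ)+2)^k₁ * (0:ℚ)^k₂)) := by
          rw [bnd k₁ k₂ ε₂ (n:ℚ), Finset.sum_range_succ]
          simp only [Nat.choose_self, Nat.cast_one, Nat.sub_self, pow_zero, one_mul]
        have H6 : ∑ j ∈ Finset.range k₂, (k₂.choose j : ℚ) * 2^(k₂-j) *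
              ((-1:ℚ)^(k₁+j+1) * S k₁ j ε₁ ε₂ (n+3) (n+2))
            = ∑ j ∈ Finset.range k₂, ((-1:ℚ)^(k₁+k₂+1) * ((k₂.choose j:ℚ) * (-2)^(k₂-j) *
                  (S k₁ j ε₁ ε₂ (n+3) (n+2)
                    - (if ε₂ = 1 then ((n:ℚ)+1)^k₁ else ((n:ℚ)+2)^k₁ * (0:ℚ)^j)))
                + (-1:ℚ)^(k₁+k₂+1) * ((k₂.choose j:ℚ) * (-2)^(k₂-j) *
                  (if ε₂ = 1 then ((n:ℚ)+1)^k₁ else ((n:ℚ)+2)^k₁ * (0:ℚ)^j))) := by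
          refine Finset.sum_congr rfl fun j hj => ?_
          have hsgn := sign_eq k₁ k₂ j (le_of_lt (mem_range.mp hj))
          linear_combination (-((k₂.choose j : ℚ) * S k₁ j ε₁ ε₂ (n+3) (n+2))) * hsgn
        rw [Finset.sum_add_distrib, ← Finset.mul_sum, ← Finset.mul_sum] at H6
        have hs : (-1:ℚ)^(k₁+k₂) = -((-1:ℚ)^(k₁+k₂+1)) := by rw [pow_succ]; ring
        linear_combination H1 + hind + ((-1:ℚ)^(k₁+k₂+1)) * H3 - H4 - H5 - H6
          - ((∑ j ∈ Finset.range k₂, (k₂.choose j:ℚ) * (-2)^(k₂-j) *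
                (if ε₂ = 1 then ((n:ℚ)+1)^k₁ else ((n:ℚ)+2)^k₁ * (0:ℚ)^j))
             + (if ε₂ = 1 then ((n:ℚ)+1)^k₁ else ((n:ℚ)+2)^k₁ * (0:ℚ)^k₂)) * hs
    intro n hcl
    exact key n (by omega) (by omega)
  exact ⟨p, hdeg, hlc, hopen, hclosed⟩


end Stmt8

/-- Let `k₁` and `k₂` be odd positive integers and `ε₁, ε₂ ∈ {0, 1}`. Then there exists a
polynomial `p` with rational coefficients such that `p` is odd (`p(−x) = −p(x)`), `p` has
degree exactly `k₁ + k₂ + 1`, the leading coefficient of `p` equals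
`1 / (2·(k₂ + 1)·C(k₁ + k₂ + 1, k₂ + 1))`, and for every integer `n ≥ 1` with
`n ≡ ε₁ + ε₂ (mod 2)`, the sum `∑ i₁^{k₁} · i₂^{k₂}` over all pairs of integers
`i₁, i₂ ≥ 1` with `i₁ + i₂ = n`, `i₁ ≡ ε₁ (mod 2)` and `i₂ ≡ ε₂ (mod 2)` equals `p(n)`. -/
theorem stmt_8 (k₁ k₂ : ℕ) (hk₁pos : 0 < k₁) (hk₂pos : 0 < k₂)
    (hk₁ : Odd k₁) (hk₂ : Odd k₂)
    (ε₁ ε₂ : ℕ) (hε₁ : ε₁ ≤ 1) (hε₂ : ε₂ ≤ 1) :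
    ∃ p : Polynomial ℚ,
      (∀ x : ℚ, p.eval (-x) = - p.eval x) ∧
      p.degree = (k₁ + k₂ + 1 : ℕ) ∧
      p.leadingCoeff = 1 / (2 * ((k₂ : ℚ) + 1) * (Nat.choose (k₁ + k₂ + 1) (k₂ + 1) : ℚ)) ∧
      ∀ n : ℕ, 1 ≤ n → n % 2 = (ε₁ + ε₂) % 2 →
        (∑ i ∈ Finset.Ioo 0 n,
          if i % 2 = ε₁ ∧ (n - i) % 2 = ε₂ then (i : ℚ) ^ k₁ * ((n - i : ℕ) : ℚ) ^ k₂ else 0)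
          = p.eval (n : ℚ) := by
  obtain ⟨p, hdeg, hlc, hopen, hclosed⟩ := Stmt8.main k₁ ε₁ ε₂ hk₁pos hε₁ hε₂ k₂
  have hodd1 : Odd (k₁ + k₂ + 1) := (Odd.add_odd hk₁ hk₂).add_one
  have hs : (-1:ℚ)^(k₁+k₂+1) = -1 := hodd1.neg_one_pow
  -- closed sum = open sum for n ≥ 1
  have hSC : ∀ n : ℕ, Stmt8.S k₁ k₂ ε₁ ε₂ (n+1) n = Stmt8.S k₁ k₂ ε₁ ε₂ n n := by
    intro n
    unfold Stmt8.S
    rw [Finset.sum_range_succ]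
    have : n - n = 0 := by omega
    rw [this]
    split_ifs <;> simp [zero_pow (show k₂ ≠ 0 by omega)]
  -- oddness
  set q : Polynomial ℚ := p.comp (-X) + p with hq
  have hqeval : ∀ x : ℚ, q.eval x = p.eval (-x) + p.eval x := by
    intro x
    simp [hq, eval_comp]
  have hqroot : ∀ m : ℕ, q.IsRoot (((ε₁+ε₂) % 2 + 2*(m+1) : ℕ) : ℚ) := by
    intro m
    set n : ℕ := (ε₁+ε₂) % 2 + 2*(m+1) with hn
    have h1 : 1 ≤ n := by omega
    have h2 : n % 2 = (ε₁ + ε₂) % 2 := by omega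
    have h3 := hclosed n h2
    rw [hs, hSC n] at h3
    show q.eval (n:ℚ) = 0
    rw [hqeval, h3, ← hopen n h1 h2]
    ring
  have hq0 : q = 0 := by
    apply Polynomial.eq_zero_of_infinite_isRoot
    refine Set.infinite_of_injective_forall_mem
      (f := fun m : ℕ => (((ε₁+ε₂) % 2 + 2*(m+1) : ℕ) : ℚ)) ?_ ?_
    · intro a b hab
      simp only [Nat.cast_inj] at hab
      omega
    · intro m
      exact hqroot m
  have hoddp : ∀ x : ℚ, p.eval (-x) = - p.eval x := by
    intro x
    have := hqeval x
    rw [hq0] at this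
    simp at this
    linarith
  refine ⟨p, hoddp, hdeg, ?_, ?_⟩
  · -- leading coefficient
    rw [hlc]
    have hchq : ((k₁+k₂+1).choose (k₂+1) : ℚ) * ((k₂+1) * k₂.factorial) * k₁.factorial
        = (k₁+k₂+1).factorial := by
      have h := Nat.choose_mul_factorial_mul_factorial (show k₂+1 ≤ k₁+k₂+1 by omega)
      rw [show k₁+k₂+1-(k₂+1) = k₁ from by omega, Nat.factorial_succ] at h
      exact_mod_cast h
    have hne1 : ((k₁+k₂+1).choose (k₂+1) : ℚ) ≠ 0 := by
      have := Nat.choose_pos (show k₂+1 ≤ k₁+k₂+1 by omega)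
      positivity
    have hne2 : ((k₂:ℚ)+1) ≠ 0 := by positivity
    have hne3 : ((k₁+k₂+1).factorial : ℚ) ≠ 0 := by
      exact_mod_cast Nat.factorial_ne_zero _
    have hne4 : (k₁.factorial : ℚ) ≠ 0 := by exact_mod_cast Nat.factorial_ne_zero _
    have hne5 : (k₂.factorial : ℚ) ≠ 0 := by exact_mod_cast Nat.factorial_ne_zero _
    field_simp
    push_cast at hchq ⊢
    linear_combination hchq
  · -- the sum identity
    intro n h1 h2
    rw [← hopen n h1 h2]
    unfold Stmt8.S
    apply Finset.sum_subset
    · intro i hi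
      simp only [Finset.mem_Ioo] at hi
      exact Finset.mem_range.mpr hi.2
    · intro i hi hni
      simp only [Finset.mem_range] at hi
      simp only [Finset.mem_Ioo] at hni
      have : i = 0 := by omega
      subst this
      split_ifs <;> simp [zero_pow (show k₁ ≠ 0 by omega)]
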